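/- Let A be an orthoalgebra and let x, y be distinct atoms of BSub(A) (i.e., subalgebras {0,a,a',1} and {0,b,b',1} with a,b ∉ {0,1} and {a,a'} ≠ {b,b'}) both covered by an element w of BSub(A). Then w is an 8-element Boolean subalgebra and w is the least upper bound of x and y in BSub(A). -/

import Mathlib

universe u

section Phi
variable {B : Type u} [BooleanAlgebra B] (r s t : B)

def phi (u : Bool × Bool × Bool) : B :=
  (cond u.1 r ⊥ ⊔ cond u.2.1 s ⊥) ⊔ cond u.2.2 t ⊥

variable {r s t}

lemma cond_sup (x y : Bool) (c : B) : cond x c ⊥ ⊔ cond y c ⊥ = cond (x || y) c ⊥ := by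
  cases x <;> cases y <;> simp

lemma phi_sup (u v : Bool × Bool × Bool) :
    phi r s t u ⊔ phi r s t v
      = phi r s t (u.1 || v.1, u.2.1 || v.2.1, u.2.2 || v.2.2) := by
  simp only [phi]
  rw [show ∀ a1 a2 a3 b1 b2 b3 : B,
      ((a1 ⊔ a2) ⊔ a3) ⊔ ((b1 ⊔ b2) ⊔ b3) = ((a1 ⊔ b1) ⊔ (a2 ⊔ b2)) ⊔ (a3 ⊔ b3)
      from fun _ _ _ _ _ _ => by ac_rfl, cond_sup, cond_sup, cond_sup]

variable (hrs : r ⊓ s = ⊥) (hrt : r ⊓ t = ⊥) (hst : s ⊓ t = ⊥) (htop : (r ⊔ s) ⊔ t = ⊤)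

include hrs hrt hst htop in
lemma phi_compl (u : Bool × Bool × Bool) :
    (phi r s t u)ᶜ = phi r s t (!u.1, !u.2.1, !u.2.2) := by
  have hsr : s ⊓ r = ⊥ := by rw [inf_comm]; exact hrs
  have htr : t ⊓ r = ⊥ := by rw [inf_comm]; exact hrt
  have hts : t ⊓ s = ⊥ := by rw [inf_comm]; exact hst
  obtain ⟨x, y, z⟩ := u
  cases x <;> cases y <;> cases z <;>
    simp only [phi, cond, Bool.not_true, Bool.not_false, sup_bot_eq, bot_sup_eq]
  · rw [compl_bot]; exact htop.symm
  · exact compl_unique (by simp [inf_sup_left, htr, hts]) (by rw [← htop]; try ac_rfl)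
  · exact compl_unique (by simp [inf_sup_left, hsr, hst]) (by rw [← htop]; try ac_rfl)
  · exact compl_unique (by simp [inf_sup_right, hsr, htr]) (by rw [← htop]; try ac_rfl)
  · exact compl_unique (by simp [inf_sup_left, hrs, hrt]) (by rw [← htop]; try ac_rfl)
  · exact compl_unique (by simp [inf_sup_right, hrs, hts]) (by rw [← htop]; try ac_rfl)
  · exact compl_unique (by simp [inf_sup_right, hrt, hst]) (by rw [← htop]; try ac_rfl)
  · rw [htop, compl_top]

include hrs hrt hst htop in
lemma phi_inf (u v : Bool × Bool × Bool) :
    phi r s t u ⊓ phi r s t v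
      = phi r s t (u.1 && v.1, u.2.1 && v.2.1, u.2.2 && v.2.2) := by
  have h1 : phi r s t u ⊓ phi r s t v = ((phi r s t u)ᶜ ⊔ (phi r s t v)ᶜ)ᶜ := by
    rw [compl_sup, compl_compl, compl_compl]
  rw [h1, phi_compl hrs hrt hst htop, phi_compl hrs hrt hst htop, phi_sup,
    phi_compl hrs hrt hst htop]
  simp only [Bool.not_or, Bool.not_not]

include hrs hrt hst in
lemma phi_le_left (hr0 : r ≠ ⊥) (u : Bool × Bool × Bool) : r ≤ phi r s t u ↔ u.1 = true := by
  obtain ⟨x, y, z⟩ := u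
  constructor
  · intro h
    by_contra hne
    have hu1 : x = false := Bool.eq_false_iff.mpr hne
    subst hu1
    have heq : r ⊓ phi r s t (false, y, z) = r := inf_eq_left.mpr h
    apply hr0
    rw [← heq]
    simp only [phi]
    cases y <;> cases z <;> simp [inf_sup_left, hrs, hrt]
  · intro h
    simp only at h; subst h
    simp only [phi, cond]
    exact le_sup_of_le_left (le_sup_of_le_left le_rfl)

include hrs hst in
lemma phi_le_mid (hs0 : s ≠ ⊥) (u : Bool × Bool × Bool) : s ≤ phi r s t u ↔ u.2.1 = true := by
  have hsr : s ⊓ r = ⊥ := by rw [inf_comm]; exact hrs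
  obtain ⟨x, y, z⟩ := u
  constructor
  · intro h
    by_contra hne
    have hu1 : y = false := Bool.eq_false_iff.mpr hne
    subst hu1
    have heq : s ⊓ phi r s t (x, false, z) = s := inf_eq_left.mpr h
    apply hs0
    rw [← heq]
    simp only [phi]
    cases x <;> cases z <;> simp [inf_sup_left, hsr, hst]
  · intro h
    simp only at h; subst h
    simp only [phi, cond]
    exact le_sup_of_le_left (le_sup_of_le_right le_rfl)

include hrt hst in
lemma phi_le_right (ht0 : t ≠ ⊥) (u : Bool × Bool × Bool) : t ≤ phi r s t u ↔ u.2.2 = true := by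
  have htr : t ⊓ r = ⊥ := by rw [inf_comm]; exact hrt
  have hts : t ⊓ s = ⊥ := by rw [inf_comm]; exact hst
  obtain ⟨x, y, z⟩ := u
  constructor
  · intro h
    by_contra hne
    have hu1 : z = false := Bool.eq_false_iff.mpr hne
    subst hu1
    have heq : t ⊓ phi r s t (x, y, false) = t := inf_eq_left.mpr h
    apply ht0
    rw [← heq]
    simp only [phi]
    cases x <;> cases y <;> simp [inf_sup_left, htr, hts]
  · intro h
    simp only at h; subst h
    simp only [phi, cond]
    exact le_sup_right

include hrs hrt hst in
lemma phi_injective (hr0 : r ≠ ⊥) (hs0 : s ≠ ⊥) (ht0 : t ≠ ⊥) :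
    Function.Injective (phi r s t) := by
  intro u v h
  obtain ⟨x, y, z⟩ := u
  obtain ⟨x', y', z'⟩ := v
  have h1 : x = x' := by
    rw [← Bool.coe_iff_coe, ← phi_le_left hrs hrt hst hr0 (x, y, z),
      ← phi_le_left hrs hrt hst hr0 (x', y', z'), h]
  have h2 : y = y' := by
    rw [← Bool.coe_iff_coe, ← phi_le_mid hrs hst hs0 (x, y, z),
      ← phi_le_mid hrs hst hs0 (x', y', z'), h]
  have h3 : z = z' := by
    rw [← Bool.coe_iff_coe, ← phi_le_right hrt hst ht0 (x, y, z),
      ← phi_le_right hrt hst ht0 (x', y', z'), h]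
  simp [h1, h2, h3]

end Phi

/-- An orthoalgebra: a set with a partial commutative associative sum `⊕`
(with domain of definition `Perp`), an orthocomplementation `'`, and constants
`0`, `1` (with `0 = 1'`), such that `a'` is the unique element with
`a ⊕ a' = 1`, and `a ⊕ a` is defined only when `a = 0`.  The operation
`oplus` is a total function whose values are only meaningful on `Perp`. -/
class Orthoalgebra (A : Type u) where
  Perp : A → A → Prop
  oplus : A → A → A
  ocompl : A → A
  zero : A
  one : A
  perp_comm : ∀ {a b : A}, Perp a b → Perp b a
  oplus_comm : ∀ {a b : A}, Perp a b → oplus a b = oplus b a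
  perp_assoc : ∀ {a b c : A}, Perp a b → Perp (oplus a b) c →
    Perp b c ∧ Perp a (oplus b c)
  oplus_assoc : ∀ {a b c : A}, Perp a b → Perp (oplus a b) c →
    oplus (oplus a b) c = oplus a (oplus b c)
  perp_ocompl : ∀ a : A, Perp a (ocompl a)
  oplus_ocompl : ∀ a : A, oplus a (ocompl a) = one
  ocompl_unique : ∀ {a b : A}, Perp a b → oplus a b = one → b = ocompl a
  perp_self : ∀ {a : A}, Perp a a → a = zero
  zero_def : zero = ocompl one

open Orthoalgebra

variable {A : Type u} [Orthoalgebra A]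

/-- A subalgebra of an orthoalgebra: contains `0` and `1`, closed under `'`
and under `⊕` of orthogonal pairs. -/
def IsOASubalg (S : Set A) : Prop :=
  zero ∈ S ∧ one ∈ S ∧ (∀ a ∈ S, ocompl a ∈ S) ∧
    ∀ a ∈ S, ∀ b ∈ S, Perp a b → oplus a b ∈ S

/-- A Boolean subalgebra of an orthoalgebra: a subalgebra which, as an
orthoalgebra in its own right, is Boolean, i.e. is isomorphic to the
orthoalgebra induced by a Boolean algebra. -/
def IsBooleanSubalg (S : Set A) : Prop :=
  IsOASubalg S ∧
  ∃ (B : Type u) (_ : BooleanAlgebra B) (f : S → B),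
    Function.Bijective f ∧
    (∀ z : S, (z : A) = zero → f z = ⊥) ∧
    (∀ o : S, (o : A) = one → f o = ⊤) ∧
    (∀ a c : S, (c : A) = ocompl (a : A) → f c = (f a)ᶜ) ∧
    (∀ a b : S, Perp (a : A) (b : A) ↔ f a ⊓ f b = ⊥) ∧
    (∀ a b c : S, Perp (a : A) (b : A) → (c : A) = oplus (a : A) (b : A) →
      f c = f a ⊔ f b)


variable {A : Type u} [Orthoalgebra A]

lemma ocompl_ocompl (a : A) : ocompl (ocompl a) = a := by
  have h1 : Perp (ocompl a) a := perp_comm (perp_ocompl a)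
  have h2 : oplus (ocompl a) a = one := by
    rw [oplus_comm h1]; exact oplus_ocompl a
  exact (ocompl_unique h1 h2).symm

lemma ocompl_one' : ocompl (one : A) = zero := zero_def.symm

lemma ocompl_zero' : ocompl (zero : A) = one := by
  rw [zero_def, ocompl_ocompl]

lemma ocompl_ne_zero {a : A} (h : a ≠ one) : ocompl a ≠ zero := by
  intro hc
  apply h
  rw [← ocompl_ocompl a, hc, ocompl_zero']

lemma ocompl_ne_one {a : A} (h : a ≠ zero) : ocompl a ≠ one := by
  intro hc
  apply h
  rw [← ocompl_ocompl a, hc, ocompl_one']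

lemma pullback_boolean (W : Set A) (hWsub : IsOASubalg W)
    (B : Type u) [BooleanAlgebra B] (f : ↥W → B)
    (hbij : Function.Bijective f)
    (h0 : ∀ z : ↥W, (z : A) = zero → f z = ⊥)
    (h1 : ∀ o : ↥W, (o : A) = one → f o = ⊤)
    (hc : ∀ a c : ↥W, (c : A) = ocompl (a : A) → f c = (f a)ᶜ)
    (hperp : ∀ a b : ↥W, Perp (a : A) (b : A) ↔ f a ⊓ f b = ⊥)
    (hoplus : ∀ a b c : ↥W, Perp (a : A) (b : A) → (c : A) = oplus (a : A) (b : A) →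
      f c = f a ⊔ f b)
    (S : Set B) (hbot : ⊥ ∈ S) (htop : ⊤ ∈ S)
    (hsup : ∀ x ∈ S, ∀ y ∈ S, x ⊔ y ∈ S)
    (hinf : ∀ x ∈ S, ∀ y ∈ S, x ⊓ y ∈ S)
    (hcompl : ∀ x ∈ S, xᶜ ∈ S) :
    IsBooleanSubalg {w : A | ∃ h : w ∈ W, f ⟨w, h⟩ ∈ S} := by
  set V : Set A := {w : A | ∃ h : w ∈ W, f ⟨w, h⟩ ∈ S} with hV
  have hmemW : ∀ w ∈ V, w ∈ W := fun w hw => hw.choose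
  have hmemS : ∀ (w : A) (h : w ∈ W), w ∈ V → f ⟨w, h⟩ ∈ S := by
    intro w h hw
    obtain ⟨h', hS⟩ := hw
    exact hS
  have hmemV : ∀ (w : A) (h : w ∈ W), f ⟨w, h⟩ ∈ S → w ∈ V := fun w h hS => ⟨h, hS⟩
  have hzW : (zero : A) ∈ W := hWsub.1
  have hoW : (one : A) ∈ W := hWsub.2.1
  constructor
  · -- IsOASubalg V
    refine ⟨⟨hzW, by rw [h0 ⟨zero, hzW⟩ rfl]; exact hbot⟩,
      ⟨hoW, by rw [h1 ⟨one, hoW⟩ rfl]; exact htop⟩, ?_, ?_⟩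
    · intro a ha
      obtain ⟨haW, haS⟩ := ha
      have hcW : ocompl a ∈ W := hWsub.2.2.1 a haW
      refine ⟨hcW, ?_⟩
      rw [hc ⟨a, haW⟩ ⟨ocompl a, hcW⟩ rfl]
      exact hcompl _ haS
    · intro a ha b hb hab
      obtain ⟨haW, haS⟩ := ha
      obtain ⟨hbW, hbS⟩ := hb
      have hoW' : oplus a b ∈ W := hWsub.2.2.2 a haW b hbW hab
      refine ⟨hoW', ?_⟩
      rw [hoplus ⟨a, haW⟩ ⟨b, hbW⟩ ⟨oplus a b, hoW'⟩ hab rfl]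
      exact hsup _ haS _ hbS
  · -- Boolean witness
    letI : Max ↥S := ⟨fun x y => ⟨x.1 ⊔ y.1, hsup _ x.2 _ y.2⟩⟩
    letI : Min ↥S := ⟨fun x y => ⟨x.1 ⊓ y.1, hinf _ x.2 _ y.2⟩⟩
    letI : Top ↥S := ⟨⟨⊤, htop⟩⟩
    letI : Bot ↥S := ⟨⟨⊥, hbot⟩⟩
    letI : Compl ↥S := ⟨fun x => ⟨x.1ᶜ, hcompl _ x.2⟩⟩
    letI : SDiff ↥S := ⟨fun x y => ⟨x.1 ⊓ y.1ᶜ, hinf _ x.2 _ (hcompl _ y.2)⟩⟩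
    letI : HImp ↥S := ⟨fun x y => ⟨y.1 ⊔ x.1ᶜ, hsup _ y.2 _ (hcompl _ x.2)⟩⟩
    letI instS : BooleanAlgebra ↥S :=
      Function.Injective.booleanAlgebra (Subtype.val) Subtype.val_injective
        Iff.rfl Iff.rfl
        (fun _ _ => rfl) (fun _ _ => rfl) rfl rfl (fun _ => rfl)
        (fun _ _ => sdiff_eq.symm) (fun _ _ => himp_eq.symm)
    have hval_bot : ((⊥ : ↥S) : B) = ⊥ := rfl
    have hval_top : ((⊤ : ↥S) : B) = ⊤ := rfl
    refine ⟨↥S, instS, fun z => ⟨f ⟨z.1, z.2.choose⟩, z.2.choose_spec⟩, ?_, ?_, ?_, ?_, ?_, ?_⟩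
    · constructor
      · intro z1 z2 h
        have h' : f ⟨z1.1, z1.2.choose⟩ = f ⟨z2.1, z2.2.choose⟩ := congrArg Subtype.val h
        have h2 := hbij.1 h'
        have h3 : (z1 : A) = (z2 : A) := congrArg (fun x : ↥W => (x : A)) h2
        exact Subtype.ext h3
      · rintro ⟨β, hβ⟩
        obtain ⟨w, hw⟩ := hbij.2 β
        have hwV : (w : A) ∈ V := hmemV w.1 w.2 (by rw [show (⟨w.1, w.2⟩ : ↥W) = w from rfl, hw]; exact hβ)
        refine ⟨⟨w.1, hwV⟩, Subtype.ext ?_⟩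
        show f ⟨w.1, _⟩ = β
        rw [show (⟨w.1, hwV.choose⟩ : ↥W) = w from Subtype.ext rfl]
        exact hw
    · intro z hz
      exact Subtype.ext (h0 _ hz)
    · intro o ho
      exact Subtype.ext (h1 _ ho)
    · intro a c hac
      exact Subtype.ext (hc _ _ hac)
    · intro a b
      rw [hperp ⟨a.1, a.2.choose⟩ ⟨b.1, b.2.choose⟩]
      constructor
      · intro h
        exact Subtype.ext h
      · intro h
        exact congrArg Subtype.val h
    · intro a b c hab habc
      exact Subtype.ext (hoplus _ _ _ hab habc)

lemma master (a b : A) (ha1 : a ≠ one) (hb0 : b ≠ zero) (hb1 : b ≠ one)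
    (hba : b ≠ a) (hba' : b ≠ ocompl a)
    (W : Set A) (hW : IsBooleanSubalg W)
    (B : Type u) [BooleanAlgebra B] (f : ↥W → B)
    (hbij : Function.Bijective f)
    (h0 : ∀ z : ↥W, (z : A) = zero → f z = ⊥)
    (h1 : ∀ o : ↥W, (o : A) = one → f o = ⊤)
    (hc : ∀ x c : ↥W, (c : A) = ocompl (x : A) → f c = (f x)ᶜ)
    (hperp : ∀ x y : ↥W, Perp (x : A) (y : A) ↔ f x ⊓ f y = ⊥)
    (hoplus : ∀ x y c : ↥W, Perp (x : A) (y : A) → (c : A) = oplus (x : A) (y : A) →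
      f c = f x ⊔ f y)
    (haW : a ∈ W) (hbW : b ∈ W)
    (r : B) (hr0 : r ≠ ⊥) (hrp : r ≤ f ⟨a, haW⟩) (hrne : r ≠ f ⟨a, haW⟩)
    (hxcov : ∀ U : Set A, IsBooleanSubalg U →
      ({zero, a, ocompl a, one} : Set A) ⊆ U → U ⊆ W →
      U = ({zero, a, ocompl a, one} : Set A) ∨ U = W) :
    Nat.card W = 8 ∧ ∀ U : Set A, IsOASubalg U → a ∈ U → b ∈ U → W ⊆ U := by
  have hWsub : IsOASubalg W := hW.1
  have hzW : (zero : A) ∈ W := hWsub.1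
  have hoW : (one : A) ∈ W := hWsub.2.1
  have haW' : ocompl a ∈ W := hWsub.2.2.1 a haW
  have hbW' : ocompl b ∈ W := hWsub.2.2.1 b hbW
  set p : B := f ⟨a, haW⟩ with hp
  have hfa' : f ⟨ocompl a, haW'⟩ = pᶜ := hc ⟨a, haW⟩ ⟨ocompl a, haW'⟩ rfl
  have hfz : f ⟨zero, hzW⟩ = ⊥ := h0 _ rfl
  have hfo : f ⟨one, hoW⟩ = ⊤ := h1 _ rfl
  -- injectivity helper
  have hfe : ∀ (w1 w2 : A) (hw1 : w1 ∈ W) (hw2 : w2 ∈ W),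
      f ⟨w1, hw1⟩ = f ⟨w2, hw2⟩ → w1 = w2 := by
    intro w1 w2 hw1 hw2 h
    have h2 := hbij.1 h
    exact congrArg (fun x : ↥W => (x : A)) h2
  set s : B := p ⊓ rᶜ with hs
  set t : B := pᶜ with ht
  have hpr : p ⊓ r = r := inf_eq_right.mpr hrp
  have hp_rs : r ⊔ s = p := by
    rw [hs, sup_inf_left, sup_compl_eq_top, inf_top_eq, sup_eq_right.mpr hrp]
  have hrs : r ⊓ s = ⊥ := by
    rw [hs, show r ⊓ (p ⊓ rᶜ) = (r ⊓ rᶜ) ⊓ p from by ac_rfl, inf_compl_eq_bot, bot_inf_eq]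
  have hrt : r ⊓ t = ⊥ := by
    rw [ht]
    exact le_bot_iff.mp ((inf_le_inf_right pᶜ hrp).trans (inf_compl_eq_bot (a := p)).le)
  have hst : s ⊓ t = ⊥ := by
    rw [hs, ht]
    exact le_bot_iff.mp ((inf_le_inf_right pᶜ inf_le_left).trans (inf_compl_eq_bot (a := p)).le)
  have htop : (r ⊔ s) ⊔ t = ⊤ := by rw [hp_rs, ht, sup_compl_eq_top]
  have hs0 : s ≠ ⊥ := by
    intro h
    apply hrne
    rw [← hp_rs, h, sup_bot_eq]
  have ht0 : t ≠ ⊥ := by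
    intro h
    apply ha1
    apply hfe a one haW hoW
    rw [hfo, ← hp, ← compl_compl p, ← ht, h, compl_bot]
  -- normalized phi values
  have hφ0 : phi r s t (false, false, false) = ⊥ := by simp [phi]
  have hφr : phi r s t (true, false, false) = r := by simp [phi]
  have hφs : phi r s t (false, true, false) = s := by simp [phi]
  have hφt : phi r s t (false, false, true) = t := by simp [phi]
  have hφrs : phi r s t (true, true, false) = r ⊔ s := by simp [phi]
  have hφrt : phi r s t (true, false, true) = r ⊔ t := by simp [phi]
  have hφst : phi r s t (false, true, true) = s ⊔ t := by simp [phi]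
  have hφ1 : phi r s t (true, true, true) = ⊤ := by
    simp only [phi, cond]; exact htop
  have hrc : rᶜ = s ⊔ t := by
    rw [← hφr, phi_compl hrs hrt hst htop]; simpa using hφst
  have hsc : sᶜ = r ⊔ t := by
    rw [← hφs, phi_compl hrs hrt hst htop]; simpa using hφrt
  -- the pullback subalgebra
  set S : Set B := Set.range (phi r s t) with hS
  have hbotS : ⊥ ∈ S := ⟨(false, false, false), hφ0⟩
  have htopS : ⊤ ∈ S := ⟨(true, true, true), hφ1⟩
  have hsupS : ∀ x ∈ S, ∀ y ∈ S, x ⊔ y ∈ S := by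
    rintro x ⟨u, rfl⟩ y ⟨v, rfl⟩
    exact ⟨_, (phi_sup u v).symm⟩
  have hinfS : ∀ x ∈ S, ∀ y ∈ S, x ⊓ y ∈ S := by
    rintro x ⟨u, rfl⟩ y ⟨v, rfl⟩
    exact ⟨_, (phi_inf hrs hrt hst htop u v).symm⟩
  have hcomplS : ∀ x ∈ S, xᶜ ∈ S := by
    rintro x ⟨u, rfl⟩
    exact ⟨_, (phi_compl hrs hrt hst htop u).symm⟩
  set V : Set A := {w : A | ∃ h : w ∈ W, f ⟨w, h⟩ ∈ S} with hV
  have hVbool : IsBooleanSubalg V :=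
    pullback_boolean W hWsub B f hbij h0 h1 hc hperp hoplus S hbotS htopS hsupS hinfS hcomplS
  have hxV : ({zero, a, ocompl a, one} : Set A) ⊆ V := by
    intro w hw
    rcases hw with rfl | rfl | rfl | rfl
    · exact ⟨hzW, by rw [hfz]; exact hbotS⟩
    · exact ⟨haW, by rw [← hp, ← hp_rs, ← hφrs]; exact ⟨_, rfl⟩⟩
    · exact ⟨haW', by rw [hfa', ← hφt]; exact ⟨_, rfl⟩⟩
    · exact ⟨hoW, by rw [hfo]; exact htopS⟩
  have hVW : V ⊆ W := fun w hw => hw.choose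
  -- the preimage of r witnesses V ≠ x
  obtain ⟨wr, hwr⟩ := hbij.2 r
  have hwrV : (wr : A) ∈ V := ⟨wr.2, by
    rw [show (⟨wr.1, wr.2⟩ : ↥W) = wr from rfl, hwr, ← hφr]; exact ⟨_, rfl⟩⟩
  have hwrx : (wr : A) ∉ ({zero, a, ocompl a, one} : Set A) := by
    intro hmem
    rcases hmem with h | h | h | h
    · apply hr0
      rw [← hwr, show wr = (⟨zero, hzW⟩ : ↥W) from Subtype.ext h, hfz]
    · apply hrne
      rw [← hwr, show wr = (⟨a, haW⟩ : ↥W) from Subtype.ext h, hp]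
    · have : r = pᶜ := by
        rw [← hwr, show wr = (⟨ocompl a, haW'⟩ : ↥W) from Subtype.ext h, hfa', ht]
      apply hr0
      have h2 : r ≤ pᶜ ⊓ p := le_inf this.le hrp
      rw [compl_inf_eq_bot] at h2
      exact le_bot_iff.mp h2
    · have hrtop : r = ⊤ := by
        rw [← hwr, show wr = (⟨one, hoW⟩ : ↥W) from Subtype.ext h, hfo]
      apply hrne
      exact hrtop.trans (top_unique (hrtop ▸ hrp)).symm
  have hVeqW : V = W := by
    rcases hxcov V hVbool hxV hVW with h | h
    · exact absurd (h ▸ hwrV) hwrx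
    · exact h
  -- phi is surjective
  have hφsurj : ∀ β : B, β ∈ S := by
    intro β
    obtain ⟨w, hw⟩ := hbij.2 β
    have hwV : (w : A) ∈ V := by rw [hVeqW]; exact w.2
    obtain ⟨h', hs'⟩ := hwV
    rw [show (⟨w.1, h'⟩ : ↥W) = w from Subtype.ext rfl, hw] at hs'
    exact hs'
  have hφbij : Function.Bijective (phi r s t) :=
    ⟨phi_injective hrs hrt hst hr0 hs0 ht0, fun β => hφsurj β⟩
  constructor
  · -- cardinality
    have e1 : Nat.card ↥W = Nat.card B := Nat.card_eq_of_bijective f hbij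
    have e2 : Nat.card (Bool × Bool × Bool) = Nat.card B :=
      Nat.card_eq_of_bijective _ hφbij
    rw [e1, ← e2]
    simp [Nat.card_eq_fintype_card]
  · -- least upper bound
    intro U hU haU hbU
    -- key lemma: given c, d in U with f-values r and s, W ⊆ U
    have key : ∀ (c d : A) (hcW : c ∈ W) (hdW : d ∈ W), c ∈ U → d ∈ U →
        f ⟨c, hcW⟩ = r → f ⟨d, hdW⟩ = s → W ⊆ U := by
      intro c d hcW hdW hcU hdU hfc hfd
      have hcW' : ocompl c ∈ W := hWsub.2.2.1 c hcW
      have hdW' : ocompl d ∈ W := hWsub.2.2.1 d hdW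
      have hfc' : f ⟨ocompl c, hcW'⟩ = rᶜ := by
        rw [hc ⟨c, hcW⟩ ⟨ocompl c, hcW'⟩ rfl, hfc]
      have hfd' : f ⟨ocompl d, hdW'⟩ = sᶜ := by
        rw [hc ⟨d, hdW⟩ ⟨ocompl d, hdW'⟩ rfl, hfd]
      have hcU' : ocompl c ∈ U := hU.2.2.1 c hcU
      have hdU' : ocompl d ∈ U := hU.2.2.1 d hdU
      have haU' : ocompl a ∈ U := hU.2.2.1 a haU
      intro w hwW
      obtain ⟨v, hv⟩ := hφsurj (f ⟨w, hwW⟩)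
      obtain ⟨x, y, z⟩ := v
      cases x <;> cases y <;> cases z
      · rw [hφ0] at hv
        have hwz : w = zero := hfe w zero hwW hzW (by rw [hfz, ← hv])
        rw [hwz]; exact hU.1
      · rw [hφt] at hv
        have hwz : w = ocompl a := hfe w (ocompl a) hwW haW' (by rw [hfa', ← hv])
        rw [hwz]; exact haU'
      · rw [hφs] at hv
        have hwz : w = d := hfe w d hwW hdW (by rw [hfd, ← hv])
        rw [hwz]; exact hdU
      · rw [hφst] at hv
        have hwz : w = ocompl c := hfe w (ocompl c) hwW hcW' (by rw [hfc', hrc, ← hv])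
        rw [hwz]; exact hcU'
      · rw [hφr] at hv
        have hwz : w = c := hfe w c hwW hcW (by rw [hfc, ← hv])
        rw [hwz]; exact hcU
      · rw [hφrt] at hv
        have hwz : w = ocompl d := hfe w (ocompl d) hwW hdW' (by rw [hfd', hsc, ← hv])
        rw [hwz]; exact hdU'
      · rw [hφrs] at hv
        have hwz : w = a := hfe w a hwW haW (by rw [← hp, ← hp_rs, ← hv])
        rw [hwz]; exact haU
      · rw [hφ1] at hv
        have hwz : w = one := hfe w one hwW hoW (by rw [hfo, ← hv])
        rw [hwz]; exact hU.2.1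
    -- find c with f-value r or s coming from b
    set q : B := f ⟨b, hbW⟩ with hq
    have hfb' : f ⟨ocompl b, hbW'⟩ = qᶜ := hc ⟨b, hbW⟩ ⟨ocompl b, hbW'⟩ rfl
    have hq0 : q ≠ ⊥ := fun h => hb0 (hfe b zero hbW hzW (by rw [hfz, ← h]))
    have hq1 : q ≠ ⊤ := fun h => hb1 (hfe b one hbW hoW (by rw [hfo, ← h]))
    have hqp : q ≠ p := fun h => hba (hfe b a hbW haW (by rw [← hp, ← h]))
    have hqp' : q ≠ pᶜ := fun h => hba' (hfe b (ocompl a) hbW haW' (by rw [hfa', ht, ← h]))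
    obtain ⟨v, hv⟩ := hφsurj q
    obtain ⟨x, y, z⟩ := v
    have hd_from : ∀ (c : A) (hcW : c ∈ W), c ∈ U →
        ((f ⟨c, hcW⟩ = r ∧ (f ⟨c, hcW⟩ ⊔ t)ᶜ = s) ∨ (f ⟨c, hcW⟩ = s ∧ (f ⟨c, hcW⟩ ⊔ t)ᶜ = r)) →
        W ⊆ U := by
      rintro c hcW hcU hcase
      have hperp_ca : Perp c (ocompl a) := by
        rw [hperp ⟨c, hcW⟩ ⟨ocompl a, haW'⟩, hfa']
        rcases hcase with ⟨h, _⟩ | ⟨h, _⟩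
        · rw [h]; exact hrt
        · rw [h]; exact hst
      have hdoW : oplus c (ocompl a) ∈ W := hWsub.2.2.2 c hcW _ haW' hperp_ca
      have hdoU : oplus c (ocompl a) ∈ U := hU.2.2.2 c hcU _ (hU.2.2.1 a haU) hperp_ca
      have hdW : ocompl (oplus c (ocompl a)) ∈ W := hWsub.2.2.1 _ hdoW
      have hdU : ocompl (oplus c (ocompl a)) ∈ U := hU.2.2.1 _ hdoU
      have hfdo : f ⟨oplus c (ocompl a), hdoW⟩ = f ⟨c, hcW⟩ ⊔ t := by
        rw [hoplus ⟨c, hcW⟩ ⟨ocompl a, haW'⟩ ⟨oplus c (ocompl a), hdoW⟩ hperp_ca rfl, hfa']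
      have hfd : f ⟨ocompl (oplus c (ocompl a)), hdW⟩ = (f ⟨c, hcW⟩ ⊔ t)ᶜ := by
        rw [hc ⟨oplus c (ocompl a), hdoW⟩ ⟨ocompl (oplus c (ocompl a)), hdW⟩ rfl, hfdo]
      rcases hcase with ⟨h1, h2⟩ | ⟨h1, h2⟩
      · exact key c _ hcW hdW hcU hdU h1 (by rw [hfd, h2])
      · exact key _ c hdW hcW hdU hcU (by rw [hfd, h2]) h1
    cases x <;> cases y <;> cases z
    · exact absurd (by rw [← hv, hφ0]) (Ne.symm hq0)
    · exact absurd (by rw [← hv, hφt, ht]) (Ne.symm hqp')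
    · -- q = s : c = b
      have hqs : q = s := by rw [← hv, hφs]
      refine hd_from b hbW hbU (Or.inr ⟨hqs, ?_⟩)
      rw [show f ⟨b, hbW⟩ = s from hqs, ← hrc, compl_compl]
    · -- q = s ⊔ t = rᶜ : c = b'
      have hqc : qᶜ = r := by
        rw [show q = s ⊔ t from by rw [← hv, hφst], ← hrc, compl_compl]
      refine hd_from (ocompl b) hbW' (hU.2.2.1 b hbU) (Or.inl ⟨?_, ?_⟩)
      · rw [hfb', hqc]
      · rw [hfb', hqc, ← hsc, compl_compl]
    · -- q = r : c = b
      have hqr : q = r := by rw [← hv, hφr]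
      refine hd_from b hbW hbU (Or.inl ⟨hqr, ?_⟩)
      rw [show f ⟨b, hbW⟩ = r from hqr, ← hsc, compl_compl]
    · -- q = r ⊔ t = sᶜ : c = b'
      have hqc : qᶜ = s := by
        rw [show q = r ⊔ t from by rw [← hv, hφrt], ← hsc, compl_compl]
      refine hd_from (ocompl b) hbW' (hU.2.2.1 b hbU) (Or.inr ⟨?_, ?_⟩)
      · rw [hfb', hqc]
      · rw [hfb', hqc, ← hrc, compl_compl]
    · exact absurd (by rw [← hv, hφrs, hp_rs]) (Ne.symm hqp)
    · exact absurd (by rw [← hv, hφ1]) (Ne.symm hq1)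

/-- Let `x = {0,a,a',1}` and `y = {0,b,b',1}` be distinct atoms of `BSub(A)`
both covered by an element `W` of `BSub(A)`.  Then `W` is an 8-element Boolean
subalgebra and `W` is the least upper bound of `x` and `y` in `BSub(A)`. -/
theorem stmt11 (a b : A) (ha0 : a ≠ zero) (ha1 : a ≠ one)
    (hb0 : b ≠ zero) (hb1 : b ≠ one)
    (hxy : ({zero, a, ocompl a, one} : Set A) ≠ {zero, b, ocompl b, one})
    (hx : IsBooleanSubalg ({zero, a, ocompl a, one} : Set A))
    (hy : IsBooleanSubalg ({zero, b, ocompl b, one} : Set A))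
    (W : Set A) (hW : IsBooleanSubalg W)
    -- `W` covers `x` in `BSub(A)`:
    (hxW : ({zero, a, ocompl a, one} : Set A) ⊆ W)
    (hxWne : ({zero, a, ocompl a, one} : Set A) ≠ W)
    (hxcov : ∀ U : Set A, IsBooleanSubalg U →
      ({zero, a, ocompl a, one} : Set A) ⊆ U → U ⊆ W →
      U = ({zero, a, ocompl a, one} : Set A) ∨ U = W)
    -- `W` covers `y` in `BSub(A)`:
    (hyW : ({zero, b, ocompl b, one} : Set A) ⊆ W)
    (hyWne : ({zero, b, ocompl b, one} : Set A) ≠ W)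
    (hycov : ∀ U : Set A, IsBooleanSubalg U →
      ({zero, b, ocompl b, one} : Set A) ⊆ U → U ⊆ W →
      U = ({zero, b, ocompl b, one} : Set A) ∨ U = W) :
    Nat.card W = 8 ∧
    ∀ U : Set A, IsBooleanSubalg U →
      ({zero, a, ocompl a, one} : Set A) ⊆ U →
      ({zero, b, ocompl b, one} : Set A) ⊆ U → W ⊆ U := by
  obtain ⟨B, instB, f, hbij, h0, h1, hc, hperp, hoplus⟩ := hW.2
  have hWsub : IsOASubalg W := hW.1
  have haW : a ∈ W := hxW (by simp)
  have hbW : b ∈ W := hyW (by simp)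
  have haW' : ocompl a ∈ W := hWsub.2.2.1 a haW
  have hzW : (zero : A) ∈ W := hWsub.1
  have hoW : (one : A) ∈ W := hWsub.2.1
  have hba : b ≠ a := by
    intro h
    subst h
    exact hxy rfl
  have hset : ({zero, ocompl a, ocompl (ocompl a), one} : Set A)
      = {zero, a, ocompl a, one} := by
    rw [ocompl_ocompl]
    ext w
    simp only [Set.mem_insert_iff, Set.mem_singleton_iff]
    tauto
  have hba' : b ≠ ocompl a := by
    intro h
    subst h
    exact hxy hset.symm
  have hfe : ∀ (w1 w2 : A) (hw1 : w1 ∈ W) (hw2 : w2 ∈ W),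
      f ⟨w1, hw1⟩ = f ⟨w2, hw2⟩ → w1 = w2 := by
    intro w1 w2 hw1 hw2 h
    have h2 := hbij.1 h
    exact congrArg (fun x : ↥W => (x : A)) h2
  set p : B := f ⟨a, haW⟩ with hp
  set q : B := f ⟨b, hbW⟩ with hq
  have hfa' : f ⟨ocompl a, haW'⟩ = pᶜ := hc ⟨a, haW⟩ ⟨ocompl a, haW'⟩ rfl
  have hfz : f ⟨zero, hzW⟩ = ⊥ := h0 _ rfl
  have hfo : f ⟨one, hoW⟩ = ⊤ := h1 _ rfl
  have hq0 : q ≠ ⊥ := fun h => hb0 (hfe b zero hbW hzW (by rw [hfz, ← h]))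
  have hq1 : q ≠ ⊤ := fun h => hb1 (hfe b one hbW hoW (by rw [hfo, ← h]))
  have hqp : q ≠ p := fun h => hba (hfe b a hbW haW (by rw [← hp, ← h]))
  have hqp' : q ≠ pᶜ := fun h => hba' (hfe b (ocompl a) hbW haW' (by rw [hfa', ← h]))
  have hdecomp : (p ⊓ q) ⊔ (pᶜ ⊓ q) = q := by
    rw [← inf_sup_right, sup_compl_eq_top, top_inf_eq]
  have hW' : IsBooleanSubalg W := hW
  by_cases hcase : p ⊓ q ≠ ⊥ ∧ p ⊓ q ≠ p
  · -- r := p ⊓ q works for a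
    have hm := master a b ha1 hb0 hb1 hba hba' W hW' B f hbij h0 h1 hc hperp hoplus
      haW hbW (p ⊓ q) hcase.1 inf_le_left hcase.2 hxcov
    refine ⟨hm.1, ?_⟩
    intro U hU hxU hyU
    exact hm.2 U hU.1 (hxU (by simp)) (hyU (by simp))
  · -- r := pᶜ ⊓ q works for ocompl a
    have h1' : p ⊓ q = ⊥ ∨ p ⊓ q = p := by
      by_contra hcon
      push_neg at hcon
      exact hcase ⟨hcon.1, hcon.2⟩
    have hr0 : pᶜ ⊓ q ≠ ⊥ := by
      intro h
      rw [h, sup_bot_eq] at hdecomp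
      rcases h1' with h2 | h2 <;> rw [h2] at hdecomp
      · exact hq0 hdecomp.symm
      · exact hqp hdecomp.symm
    have hrne : pᶜ ⊓ q ≠ pᶜ := by
      intro h
      rw [h] at hdecomp
      rcases h1' with h2 | h2 <;> rw [h2] at hdecomp
      · rw [bot_sup_eq] at hdecomp
        exact hqp' hdecomp.symm
      · rw [sup_compl_eq_top] at hdecomp
        exact hq1 hdecomp.symm
    have hxcov' : ∀ U : Set A, IsBooleanSubalg U →
        ({zero, ocompl a, ocompl (ocompl a), one} : Set A) ⊆ U → U ⊆ W →
        U = ({zero, ocompl a, ocompl (ocompl a), one} : Set A) ∨ U = W := by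
      intro U hU hsub hUW
      rw [hset] at hsub
      rw [hset]
      exact hxcov U hU hsub hUW
    have hba2 : b ≠ ocompl (ocompl a) := by rw [ocompl_ocompl]; exact hba
    have hrp : pᶜ ⊓ q ≤ f ⟨ocompl a, haW'⟩ := by rw [hfa']; exact inf_le_left
    have hrne' : pᶜ ⊓ q ≠ f ⟨ocompl a, haW'⟩ := by rw [hfa']; exact hrne
    have hm := master (ocompl a) b (ocompl_ne_one ha0) hb0 hb1 hba' hba2 W hW' B f
      hbij h0 h1 hc hperp hoplus haW' hbW (pᶜ ⊓ q) hr0 hrp hrne' hxcov'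
    refine ⟨hm.1, ?_⟩
    intro U hU hxU hyU
    exact hm.2 U hU.1 (hxU (by simp)) (hyU (by simp))
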